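/- For k ∈ ℕ there exists C < ∞ such that for every interval I ⊂ ℝ, every f ∈ C^k(I), and every ρ > 0, the Lebesgue measure of {x ∈ I : |f(x)| ≤ ρ} is at most C ρ^{1/k} (inf_{x∈I} |f^{(k)}(x)|)^{−1/k}. -/

import Mathlib

open MeasureTheory Set

/-- congruence of iterated derivatives under locally equal sets -/
private lemma iterDW_congr_set {f : ℝ → ℝ} {s t : Set ℝ} {x : ℝ}
    (h : s =ᶠ[nhds x] t) (n : ℕ) :
    iteratedDerivWithin n f s x = iteratedDerivWithin n f t x := by
  simp only [iteratedDerivWithin_eq_iteratedFDerivWithin,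
    iteratedFDerivWithin_congr_set h n]

/-- If `|g'| ≥ c` on an ord-connected set, then `g` expands distances by `c`
(monotonically or antitonically). -/
private lemma expand_of_deriv_bound {I : Set ℝ} (hI : I.OrdConnected) {g : ℝ → ℝ}
    (hgc : ContinuousOn g I) (hgd : DifferentiableOn ℝ g I)
    (hg'c : ContinuousOn (derivWithin g I) I)
    {c : ℝ} (hc : 0 < c) (hb : ∀ x ∈ I, c ≤ |derivWithin g I x|) :
    (∀ x ∈ I, ∀ y ∈ I, x ≤ y → c * (y - x) ≤ g y - g x) ∨
    (∀ x ∈ I, ∀ y ∈ I, x ≤ y → c * (y - x) ≤ g x - g y) := by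
  have hconv : Convex ℝ I := convex_iff_ordConnected.2 hI
  by_cases hall : ∀ x ∈ I, 0 < derivWithin g I x
  · left
    refine hconv.mul_sub_le_image_sub_of_le_deriv hgc (hgd.mono interior_subset) ?_
    intro x hx
    have hxI : x ∈ I := interior_subset hx
    rw [← derivWithin_of_mem_nhds (mem_interior_iff_mem_nhds.1 hx)]
    have h1 := hb x hxI
    rwa [abs_of_pos (hall x hxI)] at h1
  · right
    push_neg at hall
    obtain ⟨a, haI, ha0⟩ := hall
    have haneg : derivWithin g I a < 0 := by
      rcases lt_or_ge (derivWithin g I a) 0 with h | h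
      · exact h
      · have := hb a haI
        rw [abs_of_nonneg h] at this
        linarith
    have hneg : ∀ x ∈ I, derivWithin g I x < 0 := by
      intro x hx
      by_contra hpos
      push_neg at hpos
      have hsub : uIcc a x ⊆ I := hI.uIcc_subset haI hx
      have : (0 : ℝ) ∈ uIcc (derivWithin g I a) (derivWithin g I x) :=
        mem_uIcc.2 (Or.inl ⟨le_of_lt haneg, hpos⟩)
      obtain ⟨z, hz, hz0⟩ := intermediate_value_uIcc (hg'c.mono hsub) this
      have := hb z (hsub hz)
      rw [hz0] at this
      simp at this
      linarith
    have key := hconv.image_sub_le_mul_sub_of_deriv_le hgc (hgd.mono interior_subset)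
      (C := -c) ?_
    · intro x hx y hy hxy
      have := key x hx y hy hxy
      linarith
    · intro x hx
      have hxI : x ∈ I := interior_subset hx
      rw [← derivWithin_of_mem_nhds (mem_interior_iff_mem_nhds.1 hx)]
      have h1 := hb x hxI
      rw [abs_of_neg (hneg x hxI)] at h1
      linarith

/-- Base quantitative estimate: if `|g'| ≥ c` on an ord-connected set `I`, then
the sublevel set `{|g| ≤ δ}` has measure at most `4δ/c`. -/
private lemma base_measure {I : Set ℝ} (hI : I.OrdConnected) {g : ℝ → ℝ}
    (hgc : ContinuousOn g I) (hgd : DifferentiableOn ℝ g I)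
    (hg'c : ContinuousOn (derivWithin g I) I)
    {c : ℝ} (hc : 0 < c) (δ : ℝ) (hb : ∀ x ∈ I, c ≤ |derivWithin g I x|) :
    volume {x | x ∈ I ∧ |g x| ≤ δ} ≤ ENNReal.ofReal (4 * (δ / c)) := by
  set E : Set ℝ := {x | x ∈ I ∧ |g x| ≤ δ} with hE
  rcases E.eq_empty_or_nonempty with h | ⟨a, haI, haδ⟩
  · rw [h]; simp
  · have hsub : E ⊆ Icc (a - 2 * δ / c) (a + 2 * δ / c) := by
      rintro x ⟨hxI, hxδ⟩
      have hga : |g a| ≤ δ := haδ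
      have key : c * |x - a| ≤ 2 * δ := by
        obtain hmono | hanti := expand_of_deriv_bound hI hgc hgd hg'c hc hb
        · rcases le_total x a with hxa | hax
          · have := hmono x hxI a haI hxa
            have h1 : g a ≤ δ := (abs_le.1 hga).2
            have h2 : -δ ≤ g x := (abs_le.1 hxδ).1
            rw [abs_of_nonpos (by linarith)]
            linarith
          · have := hmono a haI x hxI hax
            have h1 : g x ≤ δ := (abs_le.1 hxδ).2
            have h2 : -δ ≤ g a := (abs_le.1 hga).1
            rw [abs_of_nonneg (by linarith)]
            linarith
        · rcases le_total x a with hxa | hax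
          · have := hanti x hxI a haI hxa
            have h1 : g x ≤ δ := (abs_le.1 hxδ).2
            have h2 : -δ ≤ g a := (abs_le.1 hga).1
            rw [abs_of_nonpos (by linarith)]
            linarith
          · have := hanti a haI x hxI hax
            have h1 : g a ≤ δ := (abs_le.1 hga).2
            have h2 : -δ ≤ g x := (abs_le.1 hxδ).1
            rw [abs_of_nonneg (by linarith)]
            linarith
      have habs : |x - a| ≤ 2 * δ / c := by
        rw [le_div_iff₀ hc]
        nlinarith [abs_nonneg (x - a)]
      have h1 := (abs_le.1 habs).1
      have h2 := (abs_le.1 habs).2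
      exact ⟨by linarith, by linarith⟩
    calc volume E ≤ volume (Icc (a - 2 * δ / c) (a + 2 * δ / c)) := measure_mono hsub
      _ = ENNReal.ofReal ((a + 2 * δ / c) - (a - 2 * δ / c)) := Real.volume_Icc
      _ = ENNReal.ofReal (4 * (δ / c)) := by ring_nf

/-- Main induction: sublevel estimate with the bound written as `C * (ρ/c)^(1/k)`. -/
private lemma main_induction : ∀ k : ℕ, 1 ≤ k →
    ∃ C : ℝ, 0 < C ∧ ∀ (I : Set ℝ), I.OrdConnected →
      ∀ f : ℝ → ℝ, ContDiffOn ℝ k f I →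
        ∀ (c ρ : ℝ), 0 < c → 0 < ρ →
          (∀ x ∈ I, c ≤ |iteratedDerivWithin k f I x|) →
          volume {x | x ∈ I ∧ |f x| ≤ ρ} ≤
            ENNReal.ofReal (C * (ρ / c) ^ ((1 : ℝ) / k)) := by
  intro k hk
  induction k, hk using Nat.le_induction with
  | base =>
    refine ⟨4, by norm_num, ?_⟩
    intro I hI f hf c ρ hc hρ hb
    by_cases hss : I.Subsingleton
    · have h0 : volume {x | x ∈ I ∧ |f x| ≤ ρ} = 0 := by
        have hsub : {x | x ∈ I ∧ |f x| ≤ ρ} ⊆ I := fun x hx => hx.1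
        exact le_antisymm ((measure_mono hsub).trans_eq (hss.measure_zero volume))
          (zero_le)
      rw [h0]; exact zero_le
    · rw [Set.not_subsingleton_iff] at hss
      obtain ⟨a, haI, b, hbI, hab⟩ := hss
      have hconv : Convex ℝ I := convex_iff_ordConnected.2 hI
      have hint : (interior I).Nonempty := by
        rcases lt_or_gt_of_ne hab with h | h
        · exact ⟨(a + b) / 2, interior_maximal (fun z hz => hI.out haI hbI
            ⟨le_of_lt hz.1, le_of_lt hz.2⟩) isOpen_Ioo (by constructor <;> linarith)⟩
        · exact ⟨(b + a) / 2, interior_maximal (fun z hz => hI.out hbI haI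
            ⟨le_of_lt hz.1, le_of_lt hz.2⟩) isOpen_Ioo (by constructor <;> linarith)⟩
      have hUD : UniqueDiffOn ℝ I := uniqueDiffOn_convex hconv hint
      have hb' : ∀ x ∈ I, c ≤ |derivWithin f I x| := by
        intro x hx
        have := hb x hx
        rwa [iteratedDerivWithin_one] at this
      have hgc : ContinuousOn f I := hf.continuousOn
      have hgd : DifferentiableOn ℝ f I := hf.differentiableOn one_ne_zero
      have hg'c : ContinuousOn (derivWithin f I) I :=
        hf.continuousOn_derivWithin hUD le_rfl
      have key := base_measure hI hgc hgd hg'c hc ρ hb'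
      refine key.trans (le_of_eq ?_)
      congr 1
      norm_num
  | succ k hk1 ih =>
    obtain ⟨C, hC, ihC⟩ := ih
    refine ⟨2 * C + 4, by linarith, ?_⟩
    intro I hI f hf c ρ hc hρ hb
    by_cases hss : I.Subsingleton
    · have h0 : volume {x | x ∈ I ∧ |f x| ≤ ρ} = 0 := by
        have hsub : {x | x ∈ I ∧ |f x| ≤ ρ} ⊆ I := fun x hx => hx.1
        exact le_antisymm ((measure_mono hsub).trans_eq (hss.measure_zero volume))
          (zero_le)
      rw [h0]; exact zero_le
    rw [Set.not_subsingleton_iff] at hss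
    obtain ⟨a, haI, b, hbI, hab⟩ := hss
    have hconv : Convex ℝ I := convex_iff_ordConnected.2 hI
    have hint : (interior I).Nonempty := by
      rcases lt_or_gt_of_ne hab with h | h
      · exact ⟨(a + b) / 2, interior_maximal (fun z hz => hI.out haI hbI
          ⟨le_of_lt hz.1, le_of_lt hz.2⟩) isOpen_Ioo (by constructor <;> linarith)⟩
      · exact ⟨(b + a) / 2, interior_maximal (fun z hz => hI.out hbI haI
          ⟨le_of_lt hz.1, le_of_lt hz.2⟩) isOpen_Ioo (by constructor <;> linarith)⟩
    have hUD : UniqueDiffOn ℝ I := uniqueDiffOn_convex hconv hint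
    set g : ℝ → ℝ := iteratedDerivWithin k f I with hg
    have hgc : ContinuousOn g I :=
      hf.continuousOn_iteratedDerivWithin (by exact_mod_cast Nat.le_succ k) hUD
    have hgd : DifferentiableOn ℝ g I :=
      hf.differentiableOn_iteratedDerivWithin (by exact_mod_cast Nat.lt_succ_self k) hUD
    have hg'eq : ∀ x ∈ I, derivWithin g I x = iteratedDerivWithin (k + 1) f I x :=
      fun x hx => (congrFun iteratedDerivWithin_succ x).symm
    have hg'c : ContinuousOn (derivWithin g I) I :=
      (hf.continuousOn_iteratedDerivWithin (le_refl _) hUD).congr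
        (fun x hx => hg'eq x hx)
    have hb' : ∀ x ∈ I, c ≤ |derivWithin g I x| := by
      intro x hx; rw [hg'eq x hx]; exact hb x hx
    -- choice of threshold δ
    have hu : (0 : ℝ) < ρ / c := div_pos hρ hc
    set t : ℝ := (ρ / c) ^ ((1 : ℝ) / ((k : ℝ) + 1)) with ht
    have ht0 : 0 < t := Real.rpow_pos_of_pos hu _
    set δ : ℝ := c * t with hδdef
    have hδ0 : 0 < δ := mul_pos hc ht0
    -- the three pieces
    set A : Set ℝ := {x | x ∈ I ∧ |g x| ≤ δ} with hA
    set Jp : Set ℝ := {x | x ∈ I ∧ δ < g x} with hJp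
    set Jm : Set ℝ := {x | x ∈ I ∧ g x < -δ} with hJm
    have hexp := expand_of_deriv_bound hI hgc hgd hg'c hc hb'
    have hJpord : Jp.OrdConnected := by
      refine ⟨fun x hx y hy z hz => ⟨hI.out hx.1 hy.1 hz, ?_⟩⟩
      obtain hmono | hanti := hexp
      · have := hmono x hx.1 z (hI.out hx.1 hy.1 hz) hz.1
        have hxz : c * (z - x) ≥ 0 := mul_nonneg hc.le (by linarith [hz.1])
        linarith [hx.2]
      · have := hanti z (hI.out hx.1 hy.1 hz) y hy.1 hz.2
        have hzy : c * (y - z) ≥ 0 := mul_nonneg hc.le (by linarith [hz.2])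
        linarith [hy.2]
    have hJmord : Jm.OrdConnected := by
      refine ⟨fun x hx y hy z hz => ⟨hI.out hx.1 hy.1 hz, ?_⟩⟩
      obtain hmono | hanti := hexp
      · have := hmono z (hI.out hx.1 hy.1 hz) y hy.1 hz.2
        have hzy : c * (y - z) ≥ 0 := mul_nonneg hc.le (by linarith [hz.2])
        linarith [hy.2]
      · have := hanti x hx.1 z (hI.out hx.1 hy.1 hz) hz.1
        have hxz : c * (z - x) ≥ 0 := mul_nonneg hc.le (by linarith [hz.1])
        linarith [hx.2]
    -- local equality of the sets near points of Jp, Jm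
    have hJpev : ∀ x ∈ Jp, Jp =ᶠ[nhds x] I := by
      intro x hx
      have hcw : ContinuousWithinAt g I x := hgc x hx.1
      have hev : ∀ᶠ y in nhdsWithin x I, δ < g y :=
        hcw.eventually_mem (isOpen_Ioi.mem_nhds hx.2)
      rw [eventually_nhdsWithin_iff] at hev
      filter_upwards [hev] with y hy
      simp only [hJp, Set.mem_setOf_eq]
      exact propext ⟨fun h => h.1, fun h => ⟨h, hy h⟩⟩
    have hJmev : ∀ x ∈ Jm, Jm =ᶠ[nhds x] I := by
      intro x hx
      have hcw : ContinuousWithinAt g I x := hgc x hx.1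
      have hev : ∀ᶠ y in nhdsWithin x I, g y < -δ :=
        hcw.eventually_mem (isOpen_Iio.mem_nhds hx.2)
      rw [eventually_nhdsWithin_iff] at hev
      filter_upwards [hev] with y hy
      simp only [hJm, Set.mem_setOf_eq]
      exact propext ⟨fun h => h.1, fun h => ⟨h, hy h⟩⟩
    -- bounds on the three pieces
    have hAbound : volume A ≤ ENNReal.ofReal (4 * t) := by
      have := base_measure hI hgc hgd hg'c hc δ hb'
      have hδc : δ / c = t := by
        rw [hδdef, mul_comm, mul_div_assoc, div_self (ne_of_gt hc), mul_one]
      rwa [hδc] at this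
    have hfk : ContDiffOn ℝ k f I := hf.of_le (by exact_mod_cast Nat.le_succ k)
    have hkR : (0 : ℝ) < (k : ℝ) := by exact_mod_cast hk1
    have hrpow : (ρ / δ) ^ ((1 : ℝ) / (k : ℝ)) = t := by
      have hρδ : ρ / δ = (ρ / c) ^ (1 - (1 : ℝ) / ((k : ℝ) + 1)) := by
        rw [Real.rpow_sub hu, Real.rpow_one, ← ht, hδdef, ← div_div]
      have hkne : (k : ℝ) ≠ 0 := ne_of_gt hkR
      have hk1ne : (k : ℝ) + 1 ≠ 0 := by positivity
      rw [hρδ, ← Real.rpow_mul hu.le, ht]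
      congr 1
      field_simp
      ring
    have hJpbound : volume {x | x ∈ Jp ∧ |f x| ≤ ρ} ≤ ENNReal.ofReal (C * t) := by
      have hb2 : ∀ x ∈ Jp, δ ≤ |iteratedDerivWithin k f Jp x| := by
        intro x hx
        rw [iterDW_congr_set (hJpev x hx) k]
        rw [← hg]
        calc δ ≤ g x := le_of_lt hx.2
          _ ≤ |g x| := le_abs_self _
      have := ihC Jp hJpord f (hfk.mono (fun x hx => hx.1)) δ ρ hδ0 hρ hb2
      rwa [hrpow] at this
    have hJmbound : volume {x | x ∈ Jm ∧ |f x| ≤ ρ} ≤ ENNReal.ofReal (C * t) := by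
      have hb2 : ∀ x ∈ Jm, δ ≤ |iteratedDerivWithin k f Jm x| := by
        intro x hx
        rw [iterDW_congr_set (hJmev x hx) k]
        rw [← hg]
        calc δ ≤ -g x := by linarith [hx.2]
          _ ≤ |g x| := neg_le_abs _
      have := ihC Jm hJmord f (hfk.mono (fun x hx => hx.1)) δ ρ hδ0 hρ hb2
      rwa [hrpow] at this
    -- combine
    have hcover : {x | x ∈ I ∧ |f x| ≤ ρ} ⊆
        A ∪ ({x | x ∈ Jp ∧ |f x| ≤ ρ} ∪ {x | x ∈ Jm ∧ |f x| ≤ ρ}) := by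
      rintro x ⟨hxI, hxρ⟩
      rcases le_or_gt (|g x|) δ with h | h
      · exact Or.inl ⟨hxI, h⟩
      · rcases lt_abs.1 h with h' | h'
        · exact Or.inr (Or.inl ⟨⟨hxI, h'⟩, hxρ⟩)
        · exact Or.inr (Or.inr ⟨⟨hxI, by linarith⟩, hxρ⟩)
    have hteq : t = (ρ / c) ^ ((1 : ℝ) / ((k + 1 : ℕ) : ℝ)) := by
      rw [ht]; norm_num
    calc volume {x | x ∈ I ∧ |f x| ≤ ρ}
        ≤ volume (A ∪ ({x | x ∈ Jp ∧ |f x| ≤ ρ} ∪ {x | x ∈ Jm ∧ |f x| ≤ ρ})) :=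
          measure_mono hcover
      _ ≤ volume A + volume ({x | x ∈ Jp ∧ |f x| ≤ ρ} ∪ {x | x ∈ Jm ∧ |f x| ≤ ρ}) :=
          measure_union_le _ _
      _ ≤ volume A + (volume {x | x ∈ Jp ∧ |f x| ≤ ρ} + volume {x | x ∈ Jm ∧ |f x| ≤ ρ}) :=
          add_le_add le_rfl (measure_union_le _ _)
      _ ≤ ENNReal.ofReal (4 * t) + (ENNReal.ofReal (C * t) + ENNReal.ofReal (C * t)) :=
          add_le_add hAbound (add_le_add hJpbound hJmbound)
      _ = ENNReal.ofReal ((2 * C + 4) * t) := by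
          rw [← ENNReal.ofReal_add (by positivity) (by positivity),
            ← ENNReal.ofReal_add (by positivity) (by positivity)]
          ring_nf
      _ = ENNReal.ofReal ((2 * C + 4) * (ρ / c) ^ ((1 : ℝ) / ((k + 1 : ℕ) : ℝ))) := by
          rw [← hteq]

/-- One-dimensional sublevel-set estimate (van der Corput / Christ): if `f ∈ C^k` on an
interval `I` and `|f^{(k)}| ≥ c` on `I`, then the measure of `{x ∈ I : |f(x)| ≤ ρ}` is at
most `C ρ^{1/k} c^{-1/k}`, with `C` depending only on `k`. -/
theorem sublevel_measure_bound_one_dim (k : ℕ) (hk : 0 < k) :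
    ∃ C : ℝ, 0 < C ∧ ∀ (I : Set ℝ), I.OrdConnected →
      ∀ f : ℝ → ℝ, ContDiffOn ℝ k f I →
        ∀ (c ρ : ℝ), 0 < c → 0 < ρ →
          (∀ x ∈ I, c ≤ |iteratedDerivWithin k f I x|) →
          volume {x | x ∈ I ∧ |f x| ≤ ρ} ≤
            ENNReal.ofReal (C * ρ ^ ((1 : ℝ) / k) * c ^ (-(1 : ℝ) / k)) := by
  obtain ⟨C, hC, h⟩ := main_induction k hk
  refine ⟨C, hC, ?_⟩
  intro I hI f hf c ρ hc hρ hb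
  have key := h I hI f hf c ρ hc hρ hb
  have heq : C * ρ ^ ((1 : ℝ) / k) * c ^ (-(1 : ℝ) / k) =
      C * (ρ / c) ^ ((1 : ℝ) / k) := by
    rw [Real.div_rpow hρ.le hc.le, neg_div, Real.rpow_neg hc.le]
    ring
  rw [heq]
  exact key
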